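/- Let G be a group with Λ-valued length function L (with c(g,h) ∈ Λ for all g,h) and let T(G) be the associated space with metric d(⟨n,g⟩,⟨m,h⟩) = n + m − 2·min{n,m,c(g,h)}. The action of h ∈ G defined by h·⟨n,g⟩ = ⟨L(h) − n, h⟩ when n ≤ c(g, h^{-1}) and h·⟨n,g⟩ = ⟨L(h) + n − 2c(g,h^{-1}), hg⟩ when n ≥ c(g, h^{-1}) is a well-defined bijective isometry of T(G), and this gives a group action of G on T(G) by isometries. -/

import Mathlib

section TofG

variable {Λ : Type*} [AddCommGroup Λ] [LinearOrder Λ] [IsOrderedAddMonoid Λ] {G : Type*} [Group G]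

/-- A point `⟨n, g⟩` of the disjoint union of intervals `[0, L g]_Λ`. -/
def TValid (L : G → Λ) (p : Λ × G) : Prop := 0 ≤ p.1 ∧ p.1 ≤ L p.2

/-- The identification `⟨n, g⟩ ~ ⟨m, h⟩` iff `n = m` and `n ≤ c(g, h)`. -/
def TRel (c : G → G → Λ) (p q : Λ × G) : Prop :=
  p.1 = q.1 ∧ p.1 ≤ c p.2 q.2

/-- The distance `d(⟨n,g⟩, ⟨m,h⟩) = n + m - 2 min {n, m, c(g,h)}`. -/
def TDist (c : G → G → Λ) (p q : Λ × G) : Λ :=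
  p.1 + q.1 - (min p.1 (min q.1 (c p.2 q.2)) + min p.1 (min q.1 (c p.2 q.2)))

open Classical in
/-- The action of `h ∈ G` on `T(G)`:
`h · ⟨n,g⟩ = ⟨L h - n, h⟩` when `n ≤ c(g, h⁻¹)` and
`h · ⟨n,g⟩ = ⟨L h + n - 2 c(g, h⁻¹), h g⟩` when `n ≥ c(g, h⁻¹)`. -/
noncomputable def TAct (L : G → Λ) (c : G → G → Λ) (h : G) (p : Λ × G) :
    Λ × G :=
  if p.1 ≤ c p.2 h⁻¹ then (L h - p.1, h)
  else (L h + p.1 - (c p.2 h⁻¹ + c p.2 h⁻¹), h * p.2)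

end TofG

namespace S13

variable {Λ : Type*} [AddCommGroup Λ] [LinearOrder Λ] [IsOrderedAddMonoid Λ] {G : Type*} [Group G]

theorem two_eq {x y : Λ} (h : x + x = y + y) : x = y := by
  rcases lt_trichotomy x y with h' | h' | h'
  · exact absurd h (ne_of_lt (add_lt_add h' h'))
  · exact h'
  · exact absurd h (ne_of_gt (add_lt_add h' h'))

theorem two_le {x y : Λ} (h : x + x ≤ y + y) : x ≤ y := by
  by_contra hx
  push_neg at hx
  exact absurd h (not_le.2 (add_lt_add hx hx))

theorem lec1 {x y u v : Λ} (h : u ≤ v) (e : y - x = v - u) : x ≤ y :=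
  sub_nonneg.1 (e ▸ sub_nonneg.2 h)

theorem lec2 {x y u v s t : Λ} (h : u ≤ v) (h' : s ≤ t)
    (e : y - x = (v - u) + (t - s)) : x ≤ y :=
  sub_nonneg.1 (e ▸ add_nonneg (sub_nonneg.2 h) (sub_nonneg.2 h'))

theorem eqc3 {x y a₁ b₁ a₂ b₂ a₃ b₃ : Λ} (h₁ : a₁ = b₁) (h₂ : a₂ = b₂)
    (h₃ : a₃ = b₃) (e : x - y = (a₁ - b₁) + ((a₂ - b₂) + (a₃ - b₃))) : x = y := by
  rw [h₁, h₂, h₃] at e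
  have : x - y = 0 := by rw [e]; abel
  exact sub_eq_zero.1 this

section
variable {L : G → Λ} {c : G → G → Λ}

theorem L1 (h1 : ∀ g : G, L g = 0 ↔ g = 1) : L (1 : G) = 0 := (h1 1).2 rfl

theorem csymm (hc : ∀ g h, c g h + c g h = L g + L h - L (g⁻¹ * h))
    (h2 : ∀ g : G, L g⁻¹ = L g) (g h : G) : c g h = c h g := by
  apply two_eq
  rw [hc, hc]
  have e : L (g⁻¹ * h) = L (h⁻¹ * g) := by
    rw [← h2 (h⁻¹ * g)]; congr 1; group
  rw [e]; abel

theorem cself (hc : ∀ g h, c g h + c g h = L g + L h - L (g⁻¹ * h))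
    (h1 : ∀ g : G, L g = 0 ↔ g = 1) (g : G) : c g g = L g := by
  apply two_eq
  rw [hc, show g⁻¹ * g = (1:G) by group, L1 h1]
  abel

theorem cone (hc : ∀ g h, c g h + c g h = L g + L h - L (g⁻¹ * h))
    (h1 : ∀ g : G, L g = 0 ↔ g = 1) (h2 : ∀ g : G, L g⁻¹ = L g) (g : G) :
    c g 1 = 0 := by
  apply two_eq
  rw [hc, L1 h1, show g⁻¹ * 1 = g⁻¹ by group, h2]
  abel

theorem cone' (hc : ∀ g h, c g h + c g h = L g + L h - L (g⁻¹ * h))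
    (h1 : ∀ g : G, L g = 0 ↔ g = 1) (h2 : ∀ g : G, L g⁻¹ = L g) (g : G) :
    c 1 g = 0 := by
  rw [csymm hc h2, cone hc h1 h2]

theorem cnonneg (hc : ∀ g h, c g h + c g h = L g + L h - L (g⁻¹ * h))
    (h1 : ∀ g : G, L g = 0 ↔ g = 1) (h2 : ∀ g : G, L g⁻¹ = L g)
    (h3 : ∀ g h k : G, min (c g k) (c h k) ≤ c g h) (g h : G) : 0 ≤ c g h := by
  have := h3 g h 1
  rwa [cone hc h1 h2 g, cone hc h1 h2 h, min_self] at this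

theorem cleL (hc : ∀ g h, c g h + c g h = L g + L h - L (g⁻¹ * h))
    (h1 : ∀ g : G, L g = 0 ↔ g = 1) (h2 : ∀ g : G, L g⁻¹ = L g)
    (h3 : ∀ g h k : G, min (c g k) (c h k) ≤ c g h) (g h : G) : c g h ≤ L g := by
  apply two_le
  rw [hc]
  have h0 : 0 ≤ c g⁻¹ (g⁻¹ * h) := cnonneg hc h1 h2 h3 g⁻¹ (g⁻¹ * h)
  have hd := hc g⁻¹ (g⁻¹ * h)
  rw [h2, show (g⁻¹)⁻¹ * (g⁻¹ * h) = h by group] at hd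
  have h5 : (0:Λ) ≤ L g + L (g⁻¹ * h) - L h := hd ▸ add_nonneg h0 h0
  exact lec1 h5 (by abel)

theorem cleR (hc : ∀ g h, c g h + c g h = L g + L h - L (g⁻¹ * h))
    (h1 : ∀ g : G, L g = 0 ↔ g = 1) (h2 : ∀ g : G, L g⁻¹ = L g)
    (h3 : ∀ g h k : G, min (c g k) (c h k) ≤ c g h) (g h : G) : c g h ≤ L h := by
  rw [csymm hc h2]; exact cleL hc h1 h2 h3 h g

theorem cmul (hc : ∀ g h, c g h + c g h = L g + L h - L (g⁻¹ * h))
    (h2 : ∀ g : G, L g⁻¹ = L g) (h g₁ g₂ : G) :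
    c (h * g₁) (h * g₂) = L h + c g₁ g₂ - c g₁ h⁻¹ - c g₂ h⁻¹ := by
  apply two_eq
  have e1 := hc (h * g₁) (h * g₂)
  rw [show (h * g₁)⁻¹ * (h * g₂) = g₁⁻¹ * g₂ by group] at e1
  have e2 := hc g₁ g₂
  have e3 := hc g₁ h⁻¹
  rw [h2 h, show g₁⁻¹ * h⁻¹ = (h * g₁)⁻¹ by group, h2 (h * g₁)] at e3
  have e4 := hc g₂ h⁻¹
  rw [h2 h, show g₂⁻¹ * h⁻¹ = (h * g₂)⁻¹ by group, h2 (h * g₂)] at e4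
  rw [e1]
  exact eqc3 e2.symm e3 e4 (by abel)

theorem chg (hc : ∀ g h, c g h + c g h = L g + L h - L (g⁻¹ * h))
    (h1 : ∀ g : G, L g = 0 ↔ g = 1) (h2 : ∀ g : G, L g⁻¹ = L g) (h g : G) :
    c h (h * g) = L h - c g h⁻¹ := by
  have e := cmul hc h2 h 1 g
  rw [mul_one] at e
  rw [e, cone' hc h1 h2, cone' hc h1 h2]
  abel

theorem Lmul (hc : ∀ g h, c g h + c g h = L g + L h - L (g⁻¹ * h))
    (h1 : ∀ g : G, L g = 0 ↔ g = 1) (h2 : ∀ g : G, L g⁻¹ = L g) (h g : G) :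
    L (h * g) = L h + L g - (c g h⁻¹ + c g h⁻¹) := by
  have e := cmul hc h2 h g g
  rw [cself hc h1 g] at e
  rw [← cself hc h1 (h * g), e]
  abel

theorem trel_symm (hc : ∀ g h, c g h + c g h = L g + L h - L (g⁻¹ * h))
    (h2 : ∀ g : G, L g⁻¹ = L g) {p q : Λ × G} (h : TRel c p q) : TRel c q p := by
  obtain ⟨e, le⟩ := h
  exact ⟨e.symm, by rw [← e, csymm hc h2]; exact le⟩

theorem trel_trans (hc : ∀ g h, c g h + c g h = L g + L h - L (g⁻¹ * h))
    (h2 : ∀ g : G, L g⁻¹ = L g)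
    (h3 : ∀ g h k : G, min (c g k) (c h k) ≤ c g h)
    {p q r : Λ × G} (hpq : TRel c p q) (hqr : TRel c q r) : TRel c p r := by
  obtain ⟨e1, le1⟩ := hpq
  obtain ⟨e2, le2⟩ := hqr
  refine ⟨e1.trans e2, le_trans (le_min le1 ?_) (h3 p.2 r.2 q.2)⟩
  rw [csymm hc h2, ← e1] at le2
  exact le2

end
end S13
namespace S13
section Parts
variable {Λ : Type*} [AddCommGroup Λ] [LinearOrder Λ] [IsOrderedAddMonoid Λ] {G : Type*} [Group G]
variable {L : G → Λ} {c : G → G → Λ}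

theorem part1 (hc : ∀ g h, c g h + c g h = L g + L h - L (g⁻¹ * h))
    (h1 : ∀ g : G, L g = 0 ↔ g = 1) (h2 : ∀ g : G, L g⁻¹ = L g)
    (h3 : ∀ g h k : G, min (c g k) (c h k) ≤ c g h) :
    ∀ (h : G) (p : Λ × G), TValid L p → TValid L (TAct L c h p) := by
  intro h p hv
  obtain ⟨n, k⟩ := p
  obtain ⟨hn0, hnL⟩ := hv
  have hkh : c k h⁻¹ ≤ L h := le_trans (cleR hc h1 h2 h3 k h⁻¹) (le_of_eq (h2 h))
  by_cases hA : n ≤ c k h⁻¹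
  · have hact : TAct L c h (n, k) = (L h - n, h) := by
      simp only [TAct]; rw [if_pos hA]
    rw [hact]
    exact ⟨sub_nonneg.2 (hA.trans hkh), sub_le_self _ hn0⟩
  · push_neg at hA
    have hact : TAct L c h (n, k) = (L h + n - (c k h⁻¹ + c k h⁻¹), h * k) := by
      simp only [TAct]; rw [if_neg (not_le.2 hA)]
    rw [hact]
    constructor
    · exact lec2 hkh hA.le (by abel)
    · show L h + n - (c k h⁻¹ + c k h⁻¹) ≤ L (h * k)
      rw [Lmul hc h1 h2 h k]
      exact lec1 hnL (by abel)

theorem part2 (hc : ∀ g h, c g h + c g h = L g + L h - L (g⁻¹ * h))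
    (h1 : ∀ g : G, L g = 0 ↔ g = 1) (h2 : ∀ g : G, L g⁻¹ = L g)
    (h3 : ∀ g h k : G, min (c g k) (c h k) ≤ c g h) :
    ∀ (h : G) (p q : Λ × G), TValid L p → TValid L q → TRel c p q →
      TRel c (TAct L c h p) (TAct L c h q) := by
  intro h p q hvp hvq hpq
  obtain ⟨n, g₁⟩ := p
  obtain ⟨m, g₂⟩ := q
  obtain ⟨heq, hle⟩ := hpq
  simp only at heq hle
  subst heq
  obtain ⟨hn0, hnL⟩ := hvp
  by_cases hA : n ≤ c g₁ h⁻¹ <;> by_cases hB : n ≤ c g₂ h⁻¹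
  · have e1 : TAct L c h (n, g₁) = (L h - n, h) := by
      simp only [TAct]; rw [if_pos hA]
    have e2 : TAct L c h (n, g₂) = (L h - n, h) := by
      simp only [TAct]; rw [if_pos hB]
    rw [e1, e2]
    refine ⟨rfl, ?_⟩
    show L h - n ≤ c h h
    rw [cself hc h1]
    exact sub_le_self _ hn0
  · exfalso
    apply hB
    refine le_trans (le_min ?_ ?_) (h3 g₂ h⁻¹ g₁)
    · rw [csymm hc h2 g₂ g₁]; exact hle
    · rw [csymm hc h2 h⁻¹ g₁]; exact hA
  · exfalso
    apply hA
    refine le_trans (le_min hle ?_) (h3 g₁ h⁻¹ g₂)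
    rw [csymm hc h2 h⁻¹ g₂]; exact hB
  · push_neg at hA hB
    have e1 : TAct L c h (n, g₁) = (L h + n - (c g₁ h⁻¹ + c g₁ h⁻¹), h * g₁) := by
      simp only [TAct]; rw [if_neg (not_le.2 hA)]
    have e2 : TAct L c h (n, g₂) = (L h + n - (c g₂ h⁻¹ + c g₂ h⁻¹), h * g₂) := by
      simp only [TAct]; rw [if_neg (not_le.2 hB)]
    rw [e1, e2]
    have hab : c g₁ h⁻¹ = c g₂ h⁻¹ := by
      apply le_antisymm
      · have h5 := h3 g₂ h⁻¹ g₁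
        rw [min_eq_right (by
          rw [csymm hc h2 h⁻¹ g₁, csymm hc h2 g₂ g₁]
          exact (hA.trans_le hle).le)] at h5
        rwa [csymm hc h2 h⁻¹ g₁] at h5
      · have h5 := h3 g₁ h⁻¹ g₂
        rw [min_eq_right (by
          rw [csymm hc h2 h⁻¹ g₂]
          exact (hB.trans_le hle).le)] at h5
        rwa [csymm hc h2 h⁻¹ g₂] at h5
    constructor
    · show L h + n - (c g₁ h⁻¹ + c g₁ h⁻¹) = L h + n - (c g₂ h⁻¹ + c g₂ h⁻¹)
      rw [hab]
    · show L h + n - (c g₁ h⁻¹ + c g₁ h⁻¹) ≤ c (h * g₁) (h * g₂)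
      rw [cmul hc h2, hab]
      exact lec1 hle (by abel)

theorem part3 (hc : ∀ g h, c g h + c g h = L g + L h - L (g⁻¹ * h))
    (h1 : ∀ g : G, L g = 0 ↔ g = 1) (h2 : ∀ g : G, L g⁻¹ = L g)
    (h3 : ∀ g h k : G, min (c g k) (c h k) ≤ c g h) :
    ∀ (h : G) (p q : Λ × G), TValid L p → TValid L q →
      TDist c (TAct L c h p) (TAct L c h q) = TDist c p q := by
  intro h p q hvp hvq
  obtain ⟨n, g₁⟩ := p
  obtain ⟨m, g₂⟩ := q
  obtain ⟨hn0, hnL⟩ := hvp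
  obtain ⟨hm0, hmL⟩ := hvq
  by_cases hA : n ≤ c g₁ h⁻¹ <;> by_cases hB : m ≤ c g₂ h⁻¹
  · -- both inner
    have e1 : TAct L c h (n, g₁) = (L h - n, h) := by
      simp only [TAct]; rw [if_pos hA]
    have e2 : TAct L c h (m, g₂) = (L h - m, h) := by
      simp only [TAct]; rw [if_pos hB]
    rw [e1, e2]
    simp only [TDist]
    rw [cself hc h1 h]
    have hmin : min n m ≤ c g₁ g₂ := le_trans (min_le_min hA hB) (h3 g₁ g₂ h⁻¹)
    have hr : min n (min m (c g₁ g₂)) = min n m := by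
      apply le_antisymm
      · exact min_le_min (le_refl n) (min_le_left m _)
      · exact le_min (min_le_left _ _) (le_min (min_le_right _ _) hmin)
    rw [hr]
    rcases le_total n m with hnm | hmn
    · rw [min_eq_left (sub_le_self (L h) hm0),
        min_eq_right (lec1 hnm (by abel) : L h - m ≤ L h - n),
        min_eq_left hnm]
      abel
    · rw [min_eq_left (sub_le_self (L h) hm0),
        min_eq_left (lec1 hmn (by abel) : L h - n ≤ L h - m),
        min_eq_right hmn]
      abel
  · -- n inner, m outer
    push_neg at hB
    have e1 : TAct L c h (n, g₁) = (L h - n, h) := by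
      simp only [TAct]; rw [if_pos hA]
    have e2 : TAct L c h (m, g₂) = (L h + m - (c g₂ h⁻¹ + c g₂ h⁻¹), h * g₂) := by
      simp only [TAct]; rw [if_neg (not_le.2 hB)]
    rw [e1, e2]
    simp only [TDist]
    rw [chg hc h1 h2 h g₂]
    rw [min_eq_right (lec1 hB.le (by abel) :
      L h - c g₂ h⁻¹ ≤ L h + m - (c g₂ h⁻¹ + c g₂ h⁻¹))]
    rcases le_or_gt n (c g₂ h⁻¹) with hnb | hbn
    · rw [min_eq_right (lec1 hnb (by abel) : L h - c g₂ h⁻¹ ≤ L h - n)]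
      have hγ : n ≤ c g₁ g₂ := le_trans (le_min hA hnb) (h3 g₁ g₂ h⁻¹)
      rw [min_eq_left (le_min (hnb.trans hB.le) hγ)]
      abel
    · have hγb : c g₁ g₂ = c g₂ h⁻¹ := by
        apply le_antisymm
        · have h5 := h3 g₂ h⁻¹ g₁
          rcases le_total (c g₂ g₁) (c h⁻¹ g₁) with hq | hq
          · rw [min_eq_left hq] at h5
            rwa [csymm hc h2 g₁ g₂]
          · rw [min_eq_right hq] at h5
            exfalso
            rw [csymm hc h2 h⁻¹ g₁] at h5
            exact absurd (hA.trans h5) (not_le.2 hbn)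
        · have h5 := h3 g₁ g₂ h⁻¹
          rwa [min_eq_right (hbn.le.trans hA)] at h5
      rw [min_eq_left (lec1 hbn.le (by abel) : L h - n ≤ L h - c g₂ h⁻¹)]
      rw [hγb, min_eq_right hB.le, min_eq_right hbn.le]
      abel
  · -- n outer, m inner
    push_neg at hA
    have e1 : TAct L c h (n, g₁) = (L h + n - (c g₁ h⁻¹ + c g₁ h⁻¹), h * g₁) := by
      simp only [TAct]; rw [if_neg (not_le.2 hA)]
    have e2 : TAct L c h (m, g₂) = (L h - m, h) := by
      simp only [TAct]; rw [if_pos hB]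
    rw [e1, e2]
    simp only [TDist]
    rw [csymm hc h2 (h * g₁) h, chg hc h1 h2 h g₁]
    rcases le_or_gt m (c g₁ h⁻¹) with hma | ham
    · rw [min_eq_right (lec1 hma (by abel) : L h - c g₁ h⁻¹ ≤ L h - m)]
      rw [min_eq_right (lec1 hA.le (by abel) :
        L h - c g₁ h⁻¹ ≤ L h + n - (c g₁ h⁻¹ + c g₁ h⁻¹))]
      have hγ : m ≤ c g₁ g₂ := le_trans (le_min hma hB) (h3 g₁ g₂ h⁻¹)
      rw [min_eq_left hγ, min_eq_right (hma.trans hA.le)]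
      abel
    · have hγa : c g₁ g₂ = c g₁ h⁻¹ := by
        apply le_antisymm
        · have h5 := h3 g₁ h⁻¹ g₂
          rcases le_total (c g₁ g₂) (c h⁻¹ g₂) with hq | hq
          · rwa [min_eq_left hq] at h5
          · rw [min_eq_right hq] at h5
            exfalso
            rw [csymm hc h2 h⁻¹ g₂] at h5
            exact absurd (hB.trans h5) (not_le.2 ham)
        · have h5 := h3 g₁ g₂ h⁻¹
          rwa [min_eq_left (ham.le.trans hB)] at h5
      rw [min_eq_left (lec1 ham.le (by abel) : L h - m ≤ L h - c g₁ h⁻¹)]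
      rw [min_eq_right (lec2 hA.le ham.le (by abel) :
        L h - m ≤ L h + n - (c g₁ h⁻¹ + c g₁ h⁻¹))]
      rw [hγa, min_eq_right (ham.le), min_eq_right hA.le]
      abel
  · -- both outer
    push_neg at hA hB
    have e1 : TAct L c h (n, g₁) = (L h + n - (c g₁ h⁻¹ + c g₁ h⁻¹), h * g₁) := by
      simp only [TAct]; rw [if_neg (not_le.2 hA)]
    have e2 : TAct L c h (m, g₂) = (L h + m - (c g₂ h⁻¹ + c g₂ h⁻¹), h * g₂) := by
      simp only [TAct]; rw [if_neg (not_le.2 hB)]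
    rw [e1, e2]
    simp only [TDist]
    rw [cmul hc h2 h g₁ g₂]
    rcases lt_trichotomy (c g₁ h⁻¹) (c g₂ h⁻¹) with hab | hab | hab
    · have hγ : c g₁ g₂ = c g₁ h⁻¹ := by
        apply le_antisymm
        · have h5 := h3 g₁ h⁻¹ g₂
          rcases le_total (c g₁ g₂) (c h⁻¹ g₂) with hq | hq
          · rwa [min_eq_left hq] at h5
          · rw [min_eq_right hq, csymm hc h2 h⁻¹ g₂] at h5
            exact absurd hab (not_lt.2 h5)
        · have h5 := h3 g₁ g₂ h⁻¹
          rwa [min_eq_left hab.le] at h5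
      rw [hγ]
      rw [min_eq_right (lec1 hB.le (by abel) :
        L h + c g₁ h⁻¹ - c g₁ h⁻¹ - c g₂ h⁻¹ ≤ L h + m - (c g₂ h⁻¹ + c g₂ h⁻¹))]
      rw [min_eq_right (lec2 hA.le hab.le (by abel) :
        L h + c g₁ h⁻¹ - c g₁ h⁻¹ - c g₂ h⁻¹ ≤ L h + n - (c g₁ h⁻¹ + c g₁ h⁻¹))]
      rw [min_eq_right ((hab.trans hB).le), min_eq_right hA.le]
      abel
    · rw [← hab]
      rw [show L h + n - (c g₁ h⁻¹ + c g₁ h⁻¹) = n + (L h - (c g₁ h⁻¹ + c g₁ h⁻¹)) by abel]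
      rw [show L h + m - (c g₁ h⁻¹ + c g₁ h⁻¹) = m + (L h - (c g₁ h⁻¹ + c g₁ h⁻¹)) by abel]
      rw [show L h + c g₁ g₂ - c g₁ h⁻¹ - c g₁ h⁻¹ = c g₁ g₂ + (L h - (c g₁ h⁻¹ + c g₁ h⁻¹)) by abel]
      rw [min_add_add_right, min_add_add_right]
      abel
    · have hγ : c g₁ g₂ = c g₂ h⁻¹ := by
        apply le_antisymm
        · have h5 := h3 g₂ h⁻¹ g₁
          rcases le_total (c g₂ g₁) (c h⁻¹ g₁) with hq | hq
          · rw [min_eq_left hq] at h5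
            rwa [csymm hc h2 g₁ g₂]
          · rw [min_eq_right hq, csymm hc h2 h⁻¹ g₁] at h5
            exact absurd hab (not_lt.2 h5)
        · have h5 := h3 g₁ g₂ h⁻¹
          rwa [min_eq_right hab.le] at h5
      rw [hγ]
      rw [min_eq_right (lec2 hB.le hab.le (by abel) :
        L h + c g₂ h⁻¹ - c g₁ h⁻¹ - c g₂ h⁻¹ ≤ L h + m - (c g₂ h⁻¹ + c g₂ h⁻¹))]
      rw [min_eq_right (lec1 hA.le (by abel) :
        L h + c g₂ h⁻¹ - c g₁ h⁻¹ - c g₂ h⁻¹ ≤ L h + n - (c g₁ h⁻¹ + c g₁ h⁻¹))]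
      rw [min_eq_right hB.le, min_eq_right ((hab.trans hA).le)]
      abel

theorem part6 (hc : ∀ g h, c g h + c g h = L g + L h - L (g⁻¹ * h))
    (h1 : ∀ g : G, L g = 0 ↔ g = 1) (h2 : ∀ g : G, L g⁻¹ = L g)
    (h3 : ∀ g h k : G, min (c g k) (c h k) ≤ c g h) :
    ∀ p : Λ × G, TValid L p → TRel c (TAct L c 1 p) p := by
  intro p hv
  obtain ⟨n, k⟩ := p
  obtain ⟨hn0, hnL⟩ := hv
  have hco : c k (1 : G)⁻¹ = 0 := by rw [inv_one, cone hc h1 h2]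
  by_cases hA : n ≤ c k (1 : G)⁻¹
  · have hn : n = 0 := le_antisymm (by rwa [hco] at hA) hn0
    have hact : TAct L c 1 (n, k) = (L 1 - n, 1) := by
      simp only [TAct]; rw [if_pos hA]
    rw [hact]
    constructor
    · show L (1 : G) - n = n
      rw [L1 h1, hn, sub_zero]
    · show L (1 : G) - n ≤ c 1 k
      rw [L1 h1, hn, sub_zero]
      exact cnonneg hc h1 h2 h3 1 k
  · have hact : TAct L c 1 (n, k) = (L 1 + n - (c k (1:G)⁻¹ + c k (1:G)⁻¹), 1 * k) := by
      simp only [TAct]; rw [if_neg hA]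
    rw [hact]
    constructor
    · show L (1 : G) + n - (c k (1:G)⁻¹ + c k (1:G)⁻¹) = n
      rw [L1 h1, hco]; abel
    · show L (1 : G) + n - (c k (1:G)⁻¹ + c k (1:G)⁻¹) ≤ c (1 * k) k
      rw [L1 h1, hco, one_mul, cself hc h1 k]
      calc (0:Λ) + n - (0 + 0) = n := by abel
        _ ≤ L k := hnL

theorem part7 (hc : ∀ g h, c g h + c g h = L g + L h - L (g⁻¹ * h))
    (h1 : ∀ g : G, L g = 0 ↔ g = 1) (h2 : ∀ g : G, L g⁻¹ = L g)
    (h3 : ∀ g h k : G, min (c g k) (c h k) ≤ c g h) :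
    ∀ (g h : G) (p : Λ × G), TValid L p →
      TRel c (TAct L c (g * h) p) (TAct L c g (TAct L c h p)) := by
  intro g h p hv
  obtain ⟨n, k⟩ := p
  obtain ⟨hn0, hnL⟩ := hv
  have hLgh : L (g * h) = L g + L h - (c h g⁻¹ + c h g⁻¹) := Lmul hc h1 h2 g h
  have hf : c (h⁻¹ * g⁻¹) h⁻¹ = L h - c h g⁻¹ := by
    rw [csymm hc h2]
    have e := chg hc h1 h2 h⁻¹ g⁻¹
    rw [h2 h, inv_inv] at e
    rw [e, csymm hc h2 g⁻¹ h]
  have hb' : c k (h⁻¹ * g⁻¹) = c k (g * h)⁻¹ := by rw [mul_inv_rev]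
  have he : c (h * k) g⁻¹ = c h g⁻¹ + c k (g * h)⁻¹ - c k h⁻¹ := by
    have h4 := cmul hc h2 h k (h⁻¹ * g⁻¹)
    rw [show h * (h⁻¹ * g⁻¹) = g⁻¹ by group] at h4
    rw [h4, hb', hf]
    abel
  have mab : min (c k h⁻¹) (c k (g * h)⁻¹) ≤ L h - c h g⁻¹ := by
    have h5 := h3 h⁻¹ (h⁻¹ * g⁻¹) k
    rw [csymm hc h2 h⁻¹ k, csymm hc h2 (h⁻¹ * g⁻¹) k, hb',
      csymm hc h2 h⁻¹ (h⁻¹ * g⁻¹), hf] at h5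
    exact h5
  have maf : min (c k h⁻¹) (L h - c h g⁻¹) ≤ c k (g * h)⁻¹ := by
    have h5 := h3 k (h⁻¹ * g⁻¹) h⁻¹
    rwa [hf, hb'] at h5
  have mbf : min (c k (g * h)⁻¹) (L h - c h g⁻¹) ≤ c k h⁻¹ := by
    have h5 := h3 k h⁻¹ (h⁻¹ * g⁻¹)
    rwa [hb', csymm hc h2 h⁻¹ (h⁻¹ * g⁻¹), hf] at h5
  by_cases hA : n ≤ c k h⁻¹
  · have hin : TAct L c h (n, k) = (L h - n, h) := by
      simp only [TAct]; rw [if_pos hA]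
    rw [hin]
    by_cases hB : L h - n ≤ c h g⁻¹
    · have hout : TAct L c g (L h - n, h) = (L g - (L h - n), g) := by
        simp only [TAct]; rw [if_pos hB]
      rw [hout]
      have hfn : L h - c h g⁻¹ ≤ n := sub_le_comm.1 hB
      by_cases hC : n ≤ c k (g * h)⁻¹
      · have hnf : n = L h - c h g⁻¹ := le_antisymm (le_trans (le_min hA hC) mab) hfn
        have hact : TAct L c (g * h) (n, k) = (L (g * h) - n, g * h) := by
          simp only [TAct]; rw [if_pos hC]
        rw [hact]
        constructor
        · show L (g * h) - n = L g - (L h - n)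
          rw [hLgh, hnf]; abel
        · show L (g * h) - n ≤ c (g * h) g
          rw [csymm hc h2 (g * h) g, chg hc h1 h2 g h, hLgh]
          exact lec1 hfn (by abel)
      · push_neg at hC
        have hbf : c k (g * h)⁻¹ = L h - c h g⁻¹ := by
          apply le_antisymm
          · rw [min_eq_right (hC.le.trans hA)] at mab
            exact mab
          · rcases le_total (L h - c h g⁻¹) (c k h⁻¹) with hfa | hfa
            · rwa [min_eq_right hfa] at maf
            · rw [min_eq_left hfa] at maf
              exact absurd (hA.trans maf) (not_le.2 hC)
        have hact : TAct L c (g * h) (n, k)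
            = (L (g * h) + n - (c k (g * h)⁻¹ + c k (g * h)⁻¹), g * h * k) := by
          simp only [TAct]; rw [if_neg (not_le.2 hC)]
        rw [hact]
        constructor
        · show L (g * h) + n - (c k (g * h)⁻¹ + c k (g * h)⁻¹) = L g - (L h - n)
          rw [hLgh, hbf]; abel
        · show L (g * h) + n - (c k (g * h)⁻¹ + c k (g * h)⁻¹) ≤ c (g * h * k) g
          rw [csymm hc h2 (g * h * k) g, mul_assoc, chg hc h1 h2 g (h * k),
            he, hbf, hLgh]
          exact lec1 hA (by abel)
    · push_neg at hB
      have hout : TAct L c g (L h - n, h)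
          = (L g + (L h - n) - (c h g⁻¹ + c h g⁻¹), g * h) := by
        simp only [TAct]; rw [if_neg (not_le.2 hB)]
      rw [hout]
      have hnf : n < L h - c h g⁻¹ := lt_sub_comm.1 hB
      have hC : n ≤ c k (g * h)⁻¹ := le_trans (le_min hA hnf.le) maf
      have hact : TAct L c (g * h) (n, k) = (L (g * h) - n, g * h) := by
        simp only [TAct]; rw [if_pos hC]
      rw [hact]
      constructor
      · show L (g * h) - n = L g + (L h - n) - (c h g⁻¹ + c h g⁻¹)
        rw [hLgh]; abel
      · show L (g * h) - n ≤ c (g * h) (g * h)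
        rw [cself hc h1 (g * h)]
        exact sub_le_self _ hn0
  · push_neg at hA
    have hin : TAct L c h (n, k) = (L h + n - (c k h⁻¹ + c k h⁻¹), h * k) := by
      simp only [TAct]; rw [if_neg (not_le.2 hA)]
    rw [hin]
    by_cases hB : L h + n - (c k h⁻¹ + c k h⁻¹) ≤ c (h * k) g⁻¹
    · have hout : TAct L c g (L h + n - (c k h⁻¹ + c k h⁻¹), h * k)
          = (L g - (L h + n - (c k h⁻¹ + c k h⁻¹)), g) := by
        simp only [TAct]; rw [if_pos hB]
      rw [hout]
      by_cases hC : n ≤ c k (g * h)⁻¹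
      · have haf : c k h⁻¹ = L h - c h g⁻¹ := by
          apply le_antisymm
          · rw [min_eq_left (hA.le.trans hC)] at mab
            exact mab
          · rcases le_total (L h - c h g⁻¹) (c k (g * h)⁻¹) with hq | hq
            · rwa [min_eq_right hq] at mbf
            · rw [min_eq_left hq] at mbf
              exact absurd (hC.trans mbf) (not_le.2 hA)
        have hact : TAct L c (g * h) (n, k) = (L (g * h) - n, g * h) := by
          simp only [TAct]; rw [if_pos hC]
        rw [hact]
        have hfn : L h - c h g⁻¹ ≤ n := by rw [← haf]; exact hA.le
        constructor
        · show L (g * h) - n = L g - (L h + n - (c k h⁻¹ + c k h⁻¹))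
          rw [hLgh, haf]; abel
        · show L (g * h) - n ≤ c (g * h) g
          rw [csymm hc h2 (g * h) g, chg hc h1 h2 g h, hLgh]
          exact lec1 hfn (by abel)
      · push_neg at hC
        exfalso
        rw [he] at hB
        rcases le_total (c k h⁻¹) (c k (g * h)⁻¹) with hq | hq
        · rw [min_eq_left hq] at mab
          exact absurd (lec2 hB mab (by abel)) (not_le.2 hC)
        · rw [min_eq_right hq] at mab
          exact absurd (lec2 hB mab (by abel)) (not_le.2 hA)
    · push_neg at hB
      have hC : ¬ n ≤ c k (g * h)⁻¹ := by
        intro hC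
        have hab : c k h⁻¹ < c k (g * h)⁻¹ := lt_of_lt_of_le hA hC
        have hfa : L h - c h g⁻¹ ≤ c k h⁻¹ := by
          rcases le_total (c k (g * h)⁻¹) (L h - c h g⁻¹) with hq | hq
          · rw [min_eq_left hq] at mbf
            exact absurd mbf (not_le.2 hab)
          · rwa [min_eq_right hq] at mbf
        rw [he] at hB
        exact absurd (lec2 hC hfa (by abel)) (not_le.2 hB)
      have hact : TAct L c (g * h) (n, k)
          = (L (g * h) + n - (c k (g * h)⁻¹ + c k (g * h)⁻¹), g * h * k) := by
        simp only [TAct]; rw [if_neg hC]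
      have hout : TAct L c g (L h + n - (c k h⁻¹ + c k h⁻¹), h * k)
          = (L g + (L h + n - (c k h⁻¹ + c k h⁻¹))
              - (c (h * k) g⁻¹ + c (h * k) g⁻¹), g * (h * k)) := by
        simp only [TAct]; rw [if_neg (not_le.2 hB)]
      rw [hact, hout]
      constructor
      · show L (g * h) + n - (c k (g * h)⁻¹ + c k (g * h)⁻¹)
            = L g + (L h + n - (c k h⁻¹ + c k h⁻¹)) - (c (h * k) g⁻¹ + c (h * k) g⁻¹)
        rw [he, hLgh]; abel
      · show L (g * h) + n - (c k (g * h)⁻¹ + c k (g * h)⁻¹) ≤ c (g * h * k) (g * (h * k))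
        rw [show g * (h * k) = g * h * k from (mul_assoc g h k).symm,
          cself hc h1 (g * h * k), show g * h * k = (g * h) * k from rfl,
          Lmul hc h1 h2 (g * h) k, hLgh]
        exact lec1 hnL (by abel)

end Parts
end S13
namespace S13
section Parts2
variable {Λ : Type*} [AddCommGroup Λ] [LinearOrder Λ] [IsOrderedAddMonoid Λ] {G : Type*} [Group G]
variable {L : G → Λ} {c : G → G → Λ}

theorem part4 (hc : ∀ g h, c g h + c g h = L g + L h - L (g⁻¹ * h))
    (h1 : ∀ g : G, L g = 0 ↔ g = 1) (h2 : ∀ g : G, L g⁻¹ = L g)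
    (h3 : ∀ g h k : G, min (c g k) (c h k) ≤ c g h) :
    ∀ (h : G) (q : Λ × G), TValid L q →
      ∃ p : Λ × G, TValid L p ∧ TRel c (TAct L c h p) q := by
  intro h q hvq
  refine ⟨TAct L c h⁻¹ q, part1 hc h1 h2 h3 h⁻¹ q hvq, ?_⟩
  have A := part7 hc h1 h2 h3 h h⁻¹ q hvq
  rw [show h * h⁻¹ = (1 : G) by group] at A
  exact trel_trans hc h2 h3 (trel_symm hc h2 A) (part6 hc h1 h2 h3 q hvq)

theorem part5 (hc : ∀ g h, c g h + c g h = L g + L h - L (g⁻¹ * h))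
    (h1 : ∀ g : G, L g = 0 ↔ g = 1) (h2 : ∀ g : G, L g⁻¹ = L g)
    (h3 : ∀ g h k : G, min (c g k) (c h k) ≤ c g h) :
    ∀ (h : G) (p q : Λ × G), TValid L p → TValid L q →
      TRel c (TAct L c h p) (TAct L c h q) → TRel c p q := by
  intro h p q hvp hvq hpq
  have A := part7 hc h1 h2 h3 h⁻¹ h p hvp
  rw [show h⁻¹ * h = (1 : G) by group] at A
  have C := part7 hc h1 h2 h3 h⁻¹ h q hvq
  rw [show h⁻¹ * h = (1 : G) by group] at C
  have B := part2 hc h1 h2 h3 h⁻¹ _ _ (part1 hc h1 h2 h3 h p hvp)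
    (part1 hc h1 h2 h3 h q hvq) hpq
  exact trel_trans hc h2 h3 (trel_symm hc h2 (part6 hc h1 h2 h3 p hvp))
    (trel_trans hc h2 h3 A
      (trel_trans hc h2 h3 B
        (trel_trans hc h2 h3 (trel_symm hc h2 C) (part6 hc h1 h2 h3 q hvq))))

end Parts2
end S13

/-- For a group `G` with `Λ`-valued length function `L` (with
`c(g,h) ∈ Λ`), the map `h · ⟨n,g⟩` defined above is a well-defined bijective
isometry of `T(G)` (well defined and bijective modulo the identification
`TRel`), and this defines an action of `G` on `T(G)` by isometries. -/
theorem stmt_13 {Λ : Type*} [AddCommGroup Λ] [LinearOrder Λ] [IsOrderedAddMonoid Λ]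
    {G : Type*} [Group G] (L : G → Λ) (c : G → G → Λ)
    (hc : ∀ g h, c g h + c g h = L g + L h - L (g⁻¹ * h))
    (h1 : ∀ g, L g = 0 ↔ g = 1)
    (h2 : ∀ g : G, L g⁻¹ = L g)
    (h3 : ∀ g h k : G, min (c g k) (c h k) ≤ c g h) :
    -- sends points of T(G) to points of T(G)
    (∀ (h : G) (p : Λ × G), TValid L p → TValid L (TAct L c h p)) ∧
    -- well defined modulo the identification
    (∀ (h : G) (p q : Λ × G), TValid L p → TValid L q → TRel c p q →
      TRel c (TAct L c h p) (TAct L c h q)) ∧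
    -- isometry
    (∀ (h : G) (p q : Λ × G), TValid L p → TValid L q →
      TDist c (TAct L c h p) (TAct L c h q) = TDist c p q) ∧
    -- surjective modulo the identification
    (∀ (h : G) (q : Λ × G), TValid L q →
      ∃ p : Λ × G, TValid L p ∧ TRel c (TAct L c h p) q) ∧
    -- injective modulo the identification
    (∀ (h : G) (p q : Λ × G), TValid L p → TValid L q →
      TRel c (TAct L c h p) (TAct L c h q) → TRel c p q) ∧
    -- the identity acts trivially
    (∀ p : Λ × G, TValid L p → TRel c (TAct L c 1 p) p) ∧
    -- compatibility with multiplication: a group action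
    (∀ (g h : G) (p : Λ × G), TValid L p →
      TRel c (TAct L c (g * h) p) (TAct L c g (TAct L c h p))) :=
  ⟨S13.part1 hc h1 h2 h3, S13.part2 hc h1 h2 h3, S13.part3 hc h1 h2 h3,
    S13.part4 hc h1 h2 h3, S13.part5 hc h1 h2 h3, S13.part6 hc h1 h2 h3,
    S13.part7 hc h1 h2 h3⟩
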